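/- (Argument comparison) Let z₁, z₂ ∈ ℂ \ {0}, c > 0 and ω ∈ (−π, π). If |z₁| ≥ c, |z₂| ≥ c, and |z₁ − z₂| ≤ c (2 − 2cos ω)^{1/2}, then the angle between z₁ and z₂ (i.e. |arg(z₁/z₂)| taken in (−π, π]) is at most |ω|. -/

import Mathlib

/-- Argument comparison: if `|z₁|, |z₂| ≥ c` and `|z₁ − z₂| ≤ c(2 − 2cos ω)^{1/2}`
for `ω ∈ (−π, π)`, then the angle between `z₁` and `z₂` is at most `|ω|`. -/
theorem stmt5 (z₁ z₂ : ℂ) (c ω : ℝ) (hc : 0 < c)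
    (hz1 : z₁ ≠ 0) (hz2 : z₂ ≠ 0)
    (hω : ω ∈ Set.Ioo (-Real.pi) Real.pi)
    (h1 : c ≤ ‖z₁‖) (h2 : c ≤ ‖z₂‖)
    (hd : ‖z₁ - z₂‖ ≤ c * Real.sqrt (2 - 2 * Real.cos ω)) :
    |Complex.arg (z₁ / z₂)| ≤ |ω| := by
  obtain ⟨hω1, hω2⟩ := hω
  set a := ‖z₁‖ with ha'
  set b := ‖z₂‖ with hb'
  have ha : 0 < a := lt_of_lt_of_le hc h1
  have hb : 0 < b := lt_of_lt_of_le hc h2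
  set R := (z₁ * (starRingEnd ℂ) z₂).re with hR
  have hchord : a ^ 2 + b ^ 2 - 2 * R = ‖z₁ - z₂‖ ^ 2 := by
    simp only [ha', hb', hR, Complex.sq_norm, Complex.normSq_apply,
      Complex.sub_re, Complex.sub_im, Complex.mul_re, Complex.mul_im,
      Complex.conj_re, Complex.conj_im]
    ring
  have hs : (0:ℝ) ≤ 2 - 2 * Real.cos ω := by nlinarith [Real.cos_le_one ω]
  have hd2 : ‖z₁ - z₂‖ ^ 2 ≤ c ^ 2 * (2 - 2 * Real.cos ω) := by
    have h := mul_self_le_mul_self (norm_nonneg _) hd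
    have hsq : Real.sqrt (2 - 2 * Real.cos ω) ^ 2 = 2 - 2 * Real.cos ω :=
      Real.sq_sqrt hs
    nlinarith [h, hsq]
  have hcc : c * c ≤ a * b := mul_le_mul h1 h2 hc.le ha.le
  have hRge : a * b * Real.cos ω ≤ R := by
    nlinarith [hchord, hd2, sq_nonneg (a - b), Real.cos_le_one ω]
  have hu : z₁ / z₂ ≠ 0 := div_ne_zero hz1 hz2
  have hnsq : Complex.normSq z₂ = b ^ 2 := by
    rw [← Complex.sq_norm]
  have hcos : Real.cos (Complex.arg (z₁ / z₂)) = R / (a * b) := by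
    rw [Complex.cos_arg hu, Complex.div_re, norm_div, hnsq]
    simp only [hR, Complex.mul_re, Complex.conj_re, Complex.conj_im, ha', hb']
    have e1 : ‖z₁‖ ≠ 0 := by simpa using hz1
    have e2 : ‖z₂‖ ≠ 0 := by simpa using hz2
    field_simp
    ring
  have hcosge : Real.cos ω ≤ Real.cos (Complex.arg (z₁ / z₂)) := by
    rw [hcos, le_div_iff₀ (by positivity)]
    linarith [hRge]
  by_contra hlt
  push_neg at hlt
  have h3 : Real.cos |Complex.arg (z₁ / z₂)| < Real.cos |ω| :=
    Real.cos_lt_cos_of_nonneg_of_le_pi (abs_nonneg ω) (Complex.abs_arg_le_pi _) hlt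
  rw [Real.cos_abs, Real.cos_abs] at h3
  linarith
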